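/- Let Ω be an uncountable algebraically closed field, t ∈ ℕ, and let X be an irreducible constructible subset of Ω^t. If {X_i : i ∈ I} is a countable family of closed subsets of X covering X, then X ⊆ X_i for some i ∈ I. -/

import Mathlib

open MvPolynomial

namespace Paper

/-! ### Zariski topologies on affine and projective spaces -/

/-- The Zariski topology on affine space `ι → k`, generated by the basic open sets
`{x | f x ≠ 0}` for multivariate polynomials `f`. -/
def zar (k : Type) [Field k] (ι : Type) : TopologicalSpace (ι → k) :=
  TopologicalSpace.generateFrom
    {U | ∃ f : MvPolynomial ι k, U = {x | MvPolynomial.eval x f ≠ 0}}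

/-- The Zariski topology on `n × n` matrices over `k`. -/
def mzar (k : Type) [Field k] (n : ℕ) : TopologicalSpace (Matrix (Fin n) (Fin n) k) :=
  TopologicalSpace.induced (fun A (p : Fin n × Fin n) => A p.1 p.2) (zar k (Fin n × Fin n))

/-- The Zariski topology on `N`-tuples of `n × n` matrices over `k`. -/
def mNzar (k : Type) [Field k] (n N : ℕ) :
    TopologicalSpace (Fin N → Matrix (Fin n) (Fin n) k) :=
  TopologicalSpace.induced (fun g (p : Fin N × Fin n × Fin n) => g p.1 p.2.1 p.2.2)
    (zar k (Fin N × Fin n × Fin n))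

/-- Projective space of dimension `m - 1` over `k`. -/
abbrev Pt (k : Type) [Field k] (m : ℕ) := Projectivization k (Fin m → k)

/-- The Zariski topology on projective space, coinduced from the Zariski topology on the
set of nonzero vectors of affine space. -/
def pzar (k : Type) [Field k] (m : ℕ) : TopologicalSpace (Pt k m) :=
  TopologicalSpace.coinduced (Projectivization.mk' k)
    (TopologicalSpace.induced (Subtype.val) (zar k (Fin m)))

/-- The Zariski topology on the product `Matₙ(k) × ℙ^(m-1)(k)` (not the product topology),
obtained from the Zariski topology on the affine cone. -/
def mpzar (k : Type) [Field k] (n m : ℕ) :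
    TopologicalSpace (Matrix (Fin n) (Fin n) k × Pt k m) :=
  TopologicalSpace.coinduced
    (fun x : Matrix (Fin n) (Fin n) k × {v : Fin m → k // v ≠ 0} =>
      (x.1, Projectivization.mk' k x.2))
    (TopologicalSpace.induced
      (fun x (p : (Fin n × Fin n) ⊕ Fin m) => Sum.elim (fun q => x.1 q.1 q.2) x.2.1 p)
      (zar k ((Fin n × Fin n) ⊕ Fin m)))

/-- The Zariski topology on the product `ℙ^(m-1)(k) × Matₙ(k)^N`, from the affine cone. -/
def pNzar (k : Type) [Field k] (m n N : ℕ) :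
    TopologicalSpace (Pt k m × (Fin N → Matrix (Fin n) (Fin n) k)) :=
  TopologicalSpace.coinduced
    (fun x : {v : Fin m → k // v ≠ 0} × (Fin N → Matrix (Fin n) (Fin n) k) =>
      (Projectivization.mk' k x.1, x.2))
    (TopologicalSpace.induced
      (fun x (p : Fin m ⊕ (Fin N × Fin n × Fin n)) =>
        Sum.elim x.1.1 (fun q => x.2 q.1 q.2.1 q.2.2) p)
      (zar k (Fin m ⊕ (Fin N × Fin n × Fin n))))

/-- The Zariski topology on `ℙ^(a-1)(k) × ℙ^(b-1)(k)`, from the affine cone. -/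
def ppzar (k : Type) [Field k] (a b : ℕ) : TopologicalSpace (Pt k a × Pt k b) :=
  TopologicalSpace.coinduced
    (fun x : {v : Fin a → k // v ≠ 0} × {w : Fin b → k // w ≠ 0} =>
      (Projectivization.mk' k x.1, Projectivization.mk' k x.2))
    (TopologicalSpace.induced
      (fun x (p : Fin a ⊕ Fin b) => Sum.elim x.1.1 x.2.1 p)
      (zar k (Fin a ⊕ Fin b)))

/-! ### Relative topological notions -/

/-- `A` is a closed subset of the subspace `S`. -/
def relClosed {α : Type} (t : TopologicalSpace α) (S A : Set α) : Prop :=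
  ∃ C, @IsClosed _ t C ∧ A = C ∩ S

/-- `A` is an open subset of the subspace `S`. -/
def relOpen {α : Type} (t : TopologicalSpace α) (S A : Set α) : Prop :=
  ∃ U, @IsOpen _ t U ∧ A = U ∩ S

/-- `A ⊆ S` is dense in the subspace `S`. -/
def relDense {α : Type} (t : TopologicalSpace α) (S A : Set α) : Prop :=
  S ⊆ @closure _ t A

/-- The dimension of a subset `A` of a topological space: the topological Krull dimension
of `A` with the subspace topology. -/
noncomputable def sdim {α : Type} (t : TopologicalSpace α) (A : Set α) : WithBot ℕ∞ :=
  @topologicalKrullDim A (TopologicalSpace.induced Subtype.val t)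

/-- `D` is an irreducible component of the subset `S`: an irreducible subset of `S` that is
maximal among irreducible subsets of `S`. -/
def IsIrrCompOf {α : Type} (t : TopologicalSpace α) (S D : Set α) : Prop :=
  D ⊆ S ∧ @IsIrreducible _ t D ∧ ∀ D', D ⊆ D' → D' ⊆ S → @IsIrreducible _ t D' → D' = D

/-! ### Linear algebraic groups as Zariski-closed subgroups of `GLₙ` -/

/-- `S` is a subgroup of invertible matrices. -/
def IsSubgroupSet (k : Type) [Field k] {n : ℕ} (S : Set (Matrix (Fin n) (Fin n) k)) : Prop :=
  (∀ A ∈ S, IsUnit A.det) ∧ 1 ∈ S ∧ (∀ A ∈ S, ∀ B ∈ S, A * B ∈ S) ∧ (∀ A ∈ S, A⁻¹ ∈ S)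

/-- A linear algebraic group over `k`: a Zariski-closed subgroup of some `GLₙ(k)`. -/
structure LAG (k : Type) [Field k] where
  n : ℕ
  carrier : Set (Matrix (Fin n) (Fin n) k)
  subgroup : IsSubgroupSet k carrier
  closed : relClosed (mzar k n) {A | IsUnit A.det} carrier

/-- A unipotent matrix. -/
def IsUnipotentM (k : Type) [Field k] {n : ℕ} (A : Matrix (Fin n) (Fin n) k) : Prop :=
  (A - 1) ^ n = 0

/-- `T` is normalised by `S`. -/
def NormalIn (k : Type) [Field k] {n : ℕ} (S T : Set (Matrix (Fin n) (Fin n) k)) : Prop :=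
  ∀ g ∈ S, ∀ A ∈ T, g * A * g⁻¹ ∈ T

/-- A (closed sub)group of matrices is reductive: its unipotent radical is trivial, i.e.
every closed connected normal unipotent subgroup is trivial. -/
def IsReductiveSet (k : Type) [Field k] {n : ℕ} (S : Set (Matrix (Fin n) (Fin n) k)) : Prop :=
  ∀ T, T ⊆ S → IsSubgroupSet k T → NormalIn k S T → relClosed (mzar k n) S T →
    @IsPreconnected _ (mzar k n) T → (∀ A ∈ T, IsUnipotentM k A) → T ⊆ {1}

/-- The unipotent radical of a matrix group `S`: the union (= the largest) of the closed
connected normal unipotent subgroups of `S`. -/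
def RuSet (k : Type) [Field k] {n : ℕ} (S : Set (Matrix (Fin n) (Fin n) k)) :
    Set (Matrix (Fin n) (Fin n) k) :=
  ⋃₀ {T | T ⊆ S ∧ IsSubgroupSet k T ∧ NormalIn k S T ∧ relClosed (mzar k n) S T ∧
      @IsPreconnected _ (mzar k n) T ∧ ∀ A ∈ T, IsUnipotentM k A}

/-- The identity component of a matrix group `S`. -/
def idComp (k : Type) [Field k] {n : ℕ} (S : Set (Matrix (Fin n) (Fin n) k)) :
    Set (Matrix (Fin n) (Fin n) k) :=
  ⋃₀ {T | T ⊆ S ∧ 1 ∈ T ∧ @IsPreconnected _ (mzar k n) T}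

/-- The closed subgroup of `G` topologically generated by a subset `S`. -/
def genClosed (k : Type) [Field k] {n : ℕ} (G S : Set (Matrix (Fin n) (Fin n) k)) :
    Set (Matrix (Fin n) (Fin n) k) :=
  ⋂₀ {T | S ⊆ T ∧ T ⊆ G ∧ IsSubgroupSet k T ∧ relClosed (mzar k n) G T}

/-- A cocharacter of a linear algebraic group `G`: a regular homomorphism `k* → G`,
whose matrix entries are Laurent polynomials in the parameter. -/
structure Cochar (k : Type) [Field k] (G : LAG k) where
  toFun : k → Matrix (Fin G.n) (Fin G.n) k
  mem : ∀ a : k, a ≠ 0 → toFun a ∈ G.carrier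
  map_one : toFun 1 = 1
  map_mul : ∀ a b : k, a ≠ 0 → b ≠ 0 → toFun (a * b) = toFun a * toFun b
  regular : ∃ (p : Fin G.n → Fin G.n → Polynomial k) (N : ℕ),
    ∀ a : k, a ≠ 0 → ∀ i j, (p i j).eval a = a ^ N * toFun a i j

/-- `h` is the limit as `a → 0` of `λ(a) * g * λ(a)⁻¹`: the matrix entries of the conjugate
extend polynomially to `a = 0` with value `h`. -/
def HasLim (k : Type) [Field k] {G : LAG k} (l : Cochar k G)
    (g h : Matrix (Fin G.n) (Fin G.n) k) : Prop :=
  ∃ p : Fin G.n → Fin G.n → Polynomial k,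
    (∀ a : k, a ≠ 0 → ∀ i j, (p i j).eval a = (l.toFun a * g * (l.toFun a)⁻¹) i j) ∧
    (∀ i j, (p i j).eval 0 = h i j)

/-- The R-parabolic subgroup `P_λ = {g ∈ G | lim_{a→0} λ(a) g λ(a)⁻¹ exists in G}`. -/
def Rpar (k : Type) [Field k] {G : LAG k} (l : Cochar k G) :
    Set (Matrix (Fin G.n) (Fin G.n) k) :=
  {g | g ∈ G.carrier ∧ ∃ h ∈ G.carrier, HasLim k l g h}

/-- The unipotent radical `R_u(P_λ) = {g ∈ G | lim_{a→0} λ(a) g λ(a)⁻¹ = 1}`. -/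
def RparRu (k : Type) [Field k] {G : LAG k} (l : Cochar k G) :
    Set (Matrix (Fin G.n) (Fin G.n) k) :=
  {g | g ∈ G.carrier ∧ HasLim k l g 1}

/-- The R-Levi subgroup `L_λ = C_G(λ(k*))`. -/
def RLevi (k : Type) [Field k] {G : LAG k} (l : Cochar k G) :
    Set (Matrix (Fin G.n) (Fin G.n) k) :=
  {g | g ∈ G.carrier ∧ ∀ a : k, a ≠ 0 → l.toFun a * g = g * l.toFun a}

/-- The image `c_λ(M)` of a subset `M ⊆ P_λ` under the canonical projection to `L_λ`,
described via limits. -/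
def cLam (k : Type) [Field k] {G : LAG k} (l : Cochar k G)
    (M : Set (Matrix (Fin G.n) (Fin G.n) k)) : Set (Matrix (Fin G.n) (Fin G.n) k) :=
  {h | ∃ g ∈ M, HasLim k l g h}

/-- `H` is a `G`-completely reducible subgroup: every R-parabolic subgroup containing `H`
has an R-Levi subgroup containing `H`. -/
def IsGcr (k : Type) [Field k] (G : LAG k) (H : Set (Matrix (Fin G.n) (Fin G.n) k)) : Prop :=
  ∀ l : Cochar k G, H ⊆ Rpar k l →
    ∃ l' : Cochar k G, Rpar k l' = Rpar k l ∧ H ⊆ RLevi k l'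

/-- The orbit of a tuple under simultaneous conjugation by `G`. -/
def conjOrbit (k : Type) [Field k] (G : LAG k) {N : ℕ}
    (t : Fin N → Matrix (Fin G.n) (Fin G.n) k) :
    Set (Fin N → Matrix (Fin G.n) (Fin G.n) k) :=
  {s | ∃ g ∈ G.carrier, s = fun i => g * t i * g⁻¹}

/-- Two tuples have the same image in the character variety `G^N ⫽ G`: the closures of their
conjugation orbits intersect. -/
def piEq (k : Type) [Field k] (G : LAG k) {N : ℕ}
    (t s : Fin N → Matrix (Fin G.n) (Fin G.n) k) : Prop :=
  (@closure _ (mNzar k G.n N) (conjOrbit k G t) ∩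
    @closure _ (mNzar k G.n N) (conjOrbit k G s)).Nonempty

/-- `G·H ⪯ G·M` (unipotent-radical form): there are `s ∈ ℕ`, tuples `h ∈ H^s` and `m ∈ M^s`
such that the image of the closed subgroup generated by `h` in `H/R_u(H)` is all of
`H/R_u(H)` (equivalently `𝒢(h)·R_u(H) = H`) and `π_G(m) = π_G(h)`. -/
def preceq (k : Type) [Field k] (G : LAG k)
    (H M : Set (Matrix (Fin G.n) (Fin G.n) k)) : Prop :=
  ∃ (s : ℕ) (h m : Fin s → Matrix (Fin G.n) (Fin G.n) k),
    (∀ i, h i ∈ H) ∧ (∀ i, m i ∈ M) ∧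
    {x | ∃ a ∈ genClosed k G.carrier (Set.range h), ∃ b ∈ RuSet k H, x = a * b} = H ∧
    piEq k G m h

/-- `G·H ⪯ G·M` (generating-tuple form, for reductive `H`): there are `s ∈ ℕ`, a generating
tuple `h ∈ H^s` for `H` and `m ∈ M^s` with `π_G(m) = π_G(h)`. -/
def preceqGen (k : Type) [Field k] (G : LAG k)
    (H M : Set (Matrix (Fin G.n) (Fin G.n) k)) : Prop :=
  ∃ (s : ℕ) (h m : Fin s → Matrix (Fin G.n) (Fin G.n) k),
    (∀ i, h i ∈ H) ∧ (∀ i, m i ∈ M) ∧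
    genClosed k G.carrier (Set.range h) = H ∧
    piEq k G m h

/-- A solid field: characteristic zero, or positive characteristic and transcendental over
the prime field. -/
def Solid (k : Type) [Field k] : Prop :=
  CharZero k ∨ ((∃ p : ℕ, p.Prime ∧ (p : k) = 0) ∧ ∃ x : k, Transcendental ℤ x)

/-! ### Actions on quasi-projective varieties -/

/-- A regular (algebraic) action of a linear algebraic group `G` on a quasi-projective
variety `V ⊆ ℙ^(m-1)(k)`: the action map `G × V → V` is locally given by polynomials that
are homogeneous in the projective coordinates. -/
structure ActionP (k : Type) [Field k] (G : LAG k) (m : ℕ) (V : Set (Pt k m)) where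
  act : Matrix (Fin G.n) (Fin G.n) k → Pt k m → Pt k m
  maps : ∀ g ∈ G.carrier, ∀ v ∈ V, act g v ∈ V
  one_act : ∀ v ∈ V, act 1 v = v
  mul_act : ∀ g ∈ G.carrier, ∀ h ∈ G.carrier, ∀ v ∈ V, act (g * h) v = act g (act h v)
  regular : ∀ g ∈ G.carrier, ∀ v : {w : Fin m → k // w ≠ 0}, Projectivization.mk' k v ∈ V →
    ∃ (d : ℕ) (F : Fin m → MvPolynomial ((Fin G.n × Fin G.n) ⊕ Fin m) k)
      (U : Set (Matrix (Fin G.n) (Fin G.n) k × Pt k m)),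
      (∀ i, (F i).IsWeightedHomogeneous (Sum.elim (fun _ => 0) (fun _ => 1)) d) ∧
      @IsOpen _ (mpzar k G.n m) U ∧ (g, Projectivization.mk' k v) ∈ U ∧
      ∀ g' ∈ G.carrier, ∀ w : {w : Fin m → k // w ≠ 0}, Projectivization.mk' k w ∈ V →
        (g', Projectivization.mk' k w) ∈ U →
        ∃ hnz : (fun i => MvPolynomial.eval
            (Sum.elim (fun q : Fin G.n × Fin G.n => g' q.1 q.2) w.1) (F i)) ≠ 0,
          act g' (Projectivization.mk' k w) =
            Projectivization.mk k (fun i => MvPolynomial.eval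
              (Sum.elim (fun q : Fin G.n × Fin G.n => g' q.1 q.2) w.1) (F i)) hnz

/-- The stabiliser `G_v` of a point `v` under an action of `G`. -/
def stab (k : Type) [Field k] {G : LAG k} {m : ℕ} {V : Set (Pt k m)}
    (A : ActionP k G m V) (v : Pt k m) : Set (Matrix (Fin G.n) (Fin G.n) k) :=
  {g | g ∈ G.carrier ∧ A.act g v = v}

/-- `G` permutes the irreducible components of `V` transitively. -/
def TransComps (k : Type) [Field k] {G : LAG k} {m : ℕ} {V : Set (Pt k m)}
    (A : ActionP k G m V) : Prop :=
  ∀ D D', IsIrrCompOf (pzar k m) V D → IsIrrCompOf (pzar k m) V D' →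
    ∃ g ∈ G.carrier, A.act g '' D = D'

/-- The set of points of `V` whose stabiliser has minimal dimension. -/
def V0 (k : Type) [Field k] {G : LAG k} {m : ℕ} {V : Set (Pt k m)}
    (A : ActionP k G m V) : Set (Pt k m) :=
  {v | v ∈ V ∧ ∀ w ∈ V, sdim (mzar k G.n) (stab k A v) ≤ sdim (mzar k G.n) (stab k A w)}

/-- A regular morphism between quasi-projective varieties `X ⊆ ℙ^(a-1)` and `Y ⊆ ℙ^(b-1)`:
locally given by homogeneous polynomials of the same degree. -/
def RegMap (k : Type) [Field k] (a b : ℕ) (X : Set (Pt k a)) (Y : Set (Pt k b))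
    (f : Pt k a → Pt k b) : Prop :=
  (∀ x ∈ X, f x ∈ Y) ∧
  ∀ v : {w : Fin a → k // w ≠ 0}, Projectivization.mk' k v ∈ X →
    ∃ (d : ℕ) (F : Fin b → MvPolynomial (Fin a) k) (U : Set (Pt k a)),
      (∀ i, (F i).IsHomogeneous d) ∧ @IsOpen _ (pzar k a) U ∧ Projectivization.mk' k v ∈ U ∧
      ∀ w : {w : Fin a → k // w ≠ 0}, Projectivization.mk' k w ∈ X →
        Projectivization.mk' k w ∈ U →
        ∃ hnz : (fun i => MvPolynomial.eval w.1 (F i)) ≠ 0,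
          f (Projectivization.mk' k w) =
            Projectivization.mk k (fun i => MvPolynomial.eval w.1 (F i)) hnz

/-! ### Actions on affine varieties -/

/-- A regular action of a linear algebraic group `G` on an affine variety `V ⊆ k^m`:
given globally by polynomials in the matrix entries, the inverse determinant and the
coordinates. -/
structure ActionA (k : Type) [Field k] (G : LAG k) (m : ℕ) (V : Set (Fin m → k)) where
  act : Matrix (Fin G.n) (Fin G.n) k → (Fin m → k) → (Fin m → k)
  maps : ∀ g ∈ G.carrier, ∀ v ∈ V, act g v ∈ V
  one_act : ∀ v ∈ V, act 1 v = v
  mul_act : ∀ g ∈ G.carrier, ∀ h ∈ G.carrier, ∀ v ∈ V, act (g * h) v = act g (act h v)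
  regular : ∃ F : Fin m → MvPolynomial (((Fin G.n × Fin G.n) ⊕ Fin m) ⊕ Unit) k,
    ∀ g ∈ G.carrier, ∀ v ∈ V, act g v = fun i =>
      MvPolynomial.eval
        (Sum.elim (Sum.elim (fun q : Fin G.n × Fin G.n => g q.1 q.2) v)
          (fun _ => Ring.inverse g.det)) (F i)

/-- A regular map on a subset `X` of affine space: locally a ratio of polynomials. -/
def RegMapA (k : Type) [Field k] {a b : ℕ} (X : Set (Fin a → k))
    (f : (Fin a → k) → (Fin b → k)) : Prop :=
  ∀ x ∈ X, ∃ (p : Fin b → MvPolynomial (Fin a) k) (q : MvPolynomial (Fin a) k),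
    MvPolynomial.eval x q ≠ 0 ∧
    ∀ y ∈ X, MvPolynomial.eval y q ≠ 0 →
      ∀ i, MvPolynomial.eval y q * f y i = MvPolynomial.eval y (p i)

/-- A subset `X` of affine space is an affine variety: it is isomorphic, via mutually inverse
regular maps, to a Zariski-closed subset of some affine space. -/
def IsAffineSubvar (k : Type) [Field k] {a : ℕ} (X : Set (Fin a → k)) : Prop :=
  ∃ (b : ℕ) (C : Set (Fin b → k)) (f : (Fin a → k) → (Fin b → k))
    (g : (Fin b → k) → (Fin a → k)),
    @IsClosed _ (zar k (Fin b)) C ∧ RegMapA k X f ∧ RegMapA k C g ∧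
    (∀ x ∈ X, f x ∈ C) ∧ (∀ y ∈ C, g y ∈ X) ∧
    (∀ x ∈ X, g (f x) = x) ∧ (∀ y ∈ C, f (g y) = y)

/-! ### Constructible sets -/

/-- A subset of affine space `Ωᵗ` that is constructible and defined over the subfield `k`:
a finite union of sets, each cut out by the vanishing of a family of `k`-polynomials and the
non-vanishing of a `k`-polynomial. -/
def IsConstructibleOver (k Ω : Type) [Field k] [Field Ω] [Algebra k Ω] (t : ℕ)
    (S : Set (Fin t → Ω)) : Prop :=
  ∃ (n : ℕ) (A : Fin n → Set (MvPolynomial (Fin t) k)) (g : Fin n → MvPolynomial (Fin t) k),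
    S = ⋃ i, {x | (∀ f ∈ A i,
        MvPolynomial.eval x (MvPolynomial.map (algebraMap k Ω) f) = 0) ∧
      MvPolynomial.eval x (MvPolynomial.map (algebraMap k Ω) (g i)) ≠ 0}

end Paper


set_option synthInstance.maxHeartbeats 1000000
set_option maxHeartbeats 4000000

namespace Paper

lemma zar_basic_isOpen {k : Type} [Field k] {ι : Type} (f : MvPolynomial ι k) :
    @IsOpen _ (zar k ι) {x | MvPolynomial.eval x f ≠ 0} :=
  TopologicalSpace.GenerateOpen.basic _ ⟨f, rfl⟩

lemma zar_mem_open {k : Type} [Field k] {ι : Type} {U : Set (ι → k)}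
    (hU : @IsOpen _ (zar k ι) U) {y : ι → k} (hy : y ∈ U) :
    ∃ f : MvPolynomial ι k, MvPolynomial.eval y f ≠ 0 ∧
      {x | MvPolynomial.eval x f ≠ 0} ⊆ U := by
  induction hU with
  | basic V hV => obtain ⟨f, rfl⟩ := hV; exact ⟨f, hy, le_refl _⟩
  | univ => exact ⟨1, by simp, by simp⟩
  | inter U V _ _ ihU ihV =>
    obtain ⟨f, hf, hfs⟩ := ihU hy.1
    obtain ⟨g, hg, hgs⟩ := ihV hy.2
    refine ⟨f * g, by simp [hf, hg], fun x hx => ?_⟩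
    simp only [Set.mem_setOf_eq, map_mul, mul_ne_zero_iff] at hx
    exact ⟨hfs hx.1, hgs hx.2⟩
  | sUnion S hS ih =>
    obtain ⟨V, hVS, hyV⟩ := hy
    obtain ⟨f, hf, hfs⟩ := ih V hVS hyV
    exact ⟨f, hf, hfs.trans (Set.subset_sUnion_of_mem hVS)⟩

lemma zar_isClosed_V {k : Type} [Field k] {ι : Type} (A : Set (MvPolynomial ι k)) :
    @IsClosed _ (zar k ι) {x | ∀ f ∈ A, MvPolynomial.eval x f = 0} := by
  letI := zar k ι
  refine { isOpen_compl := ?_ }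
  have : {x : ι → k | ∀ f ∈ A, MvPolynomial.eval x f = 0}ᶜ =
      ⋃ f ∈ A, {x | MvPolynomial.eval x f ≠ 0} := by
    ext x; simp [not_forall]
  rw [this]
  exact isOpen_biUnion (fun f _ => zar_basic_isOpen f)

lemma coeffs_mem_subfield {Ω : Type} [Field Ω] {ι : Type} (k : Subfield Ω)
    (f : MvPolynomial ι Ω) (h : ∀ m, MvPolynomial.coeff m f ∈ k) :
    ∃ f' : MvPolynomial ι ↥k, MvPolynomial.map k.subtype f' = f := by
  classical
  refine ⟨∑ m ∈ f.support, MvPolynomial.monomial m (⟨MvPolynomial.coeff m f, h m⟩ : ↥k), ?_⟩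
  rw [map_sum]
  simp only [MvPolynomial.map_monomial]
  exact f.support_sum_monomial_coeff

theorem exists_generic (Ω : Type) [Field Ω] [IsAlgClosed Ω] [Uncountable Ω] (t : ℕ)
    (κ : Type) [Field κ] [Countable κ] (ρ : κ →+* Ω)
    (p : Ideal (MvPolynomial (Fin t) κ)) [p.IsPrime] :
    ∃ x : Fin t → Ω, ∀ h, MvPolynomial.eval x (MvPolynomial.map ρ h) = 0 ↔ h ∈ p := by
  classical
  letI : Algebra κ Ω := ρ.toAlgebra
  haveI : Countable (MvPolynomial (Fin t) κ) :=
    Function.Surjective.countable (f := (AddMonoidAlgebra.ofCoeff : ((Fin t →₀ ℕ) →₀ κ) → _))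
      (fun x => ⟨AddMonoidAlgebra.coeff x, rfl⟩)
  haveI hCA : Countable (MvPolynomial (Fin t) κ ⧸ p) :=
    Function.Surjective.countable Ideal.Quotient.mk_surjective
  set A := MvPolynomial (Fin t) κ ⧸ p with hAdef
  set K := FractionRing A with hKdef
  haveI : Countable K := by
    have hsurj : Function.Surjective
        (fun q : A × A => algebraMap A K q.1 / algebraMap A K q.2) := by
      intro z
      obtain ⟨a, b, -, rfl⟩ := IsFractionRing.div_surjective (A := A) z
      exact ⟨(a, b), rfl⟩
    exact Function.Surjective.countable hsurj
  obtain ⟨s, hs⟩ := exists_isTranscendenceBasis κ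
    K
  obtain ⟨B, hB⟩ := exists_isTranscendenceBasis κ Ω
  have hcard : (Cardinal.mk Ω) = Cardinal.mk B :=
    Cardinal.lift_inj.1 (IsAlgClosed.cardinal_eq_cardinal_transcendence_basis_of_aleph0_lt _ hB
      (Cardinal.mk_le_aleph0) (Cardinal.aleph0_lt_mk (α := Ω)))
  obtain ⟨e⟩ : Nonempty (s ↪ B) := by
    rw [← Cardinal.le_def]
    calc Cardinal.mk s ≤ Cardinal.aleph0 := Cardinal.mk_le_aleph0
    _ ≤ Cardinal.mk Ω := (Cardinal.aleph0_lt_mk (α := Ω)).le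
    _ = Cardinal.mk B := hcard
  have hw : AlgebraicIndependent κ ((fun b : B => (b : Ω)) ∘ e) :=
    hB.1.comp e e.injective
  set E := IntermediateField.adjoin κ (Set.range ((fun a : s => (a : K)))) with hEdef
  have halgKE : Algebra.IsAlgebraic E K := hs.isAlgebraic_field
  letI φ : E →ₐ[κ] Ω :=
    ((IntermediateField.val _).comp hw.aevalEquivField.toAlgHom).comp hs.1.reprField
  letI : Algebra E Ω := φ.toRingHom.toAlgebra
  haveI : NoZeroSMulDivisors E K :=
    inferInstance
  haveI : NoZeroSMulDivisors E Ω :=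
    inferInstance
  letI ψ : K →ₐ[E] Ω := IsAlgClosed.lift
  refine ⟨fun i => ψ (algebraMap A K (Ideal.Quotient.mk p (X i))), fun h => ?_⟩
  have key : ∀ h : MvPolynomial (Fin t) κ,
      MvPolynomial.eval (fun i => ψ (algebraMap A K (Ideal.Quotient.mk p (X i))))
        (MvPolynomial.map ρ h) =
      ψ (algebraMap A K (Ideal.Quotient.mk p h)) := by
    intro h
    have := RingHom.congr_fun (MvPolynomial.ringHom_ext (σ := Fin t) (R := κ)
      (f := ((MvPolynomial.eval (fun i => ψ (algebraMap A K (Ideal.Quotient.mk p (X i))))).comp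
        (MvPolynomial.map ρ)))
      (g := (ψ.toRingHom.comp ((algebraMap A K).comp (Ideal.Quotient.mk p))))
      ?_ ?_) h
    · simpa using this
    · intro a
      simp only [RingHom.comp_apply, MvPolynomial.map_C, MvPolynomial.eval_C]
      have h1 : (Ideal.Quotient.mk p) (C a) = algebraMap κ A a := rfl
      rw [h1, ← IsScalarTower.algebraMap_apply κ A K]
      have h2 : algebraMap κ K a = algebraMap E K (algebraMap κ E a) :=
        (IsScalarTower.algebraMap_apply κ E K a)
      rw [h2]
      have h3 : ψ (algebraMap E K (algebraMap κ E a)) = algebraMap E Ω (algebraMap κ E a) :=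
        ψ.commutes _
      rw [AlgHom.toRingHom_eq_coe, RingHom.coe_coe, h3]
      have h4 : algebraMap E Ω (algebraMap κ E a) = φ (algebraMap κ E a) := rfl
      rw [h4, φ.commutes]
      rfl
    · intro i
      simp
  rw [key h]
  have hinj : Function.Injective (fun a : A => ψ (algebraMap A K a)) := by
    exact ψ.toRingHom.injective.comp (IsFractionRing.injective A K)
  constructor
  · intro h0
    have : (fun a : A => ψ (algebraMap A K a)) (Ideal.Quotient.mk p h) =
        (fun a : A => ψ (algebraMap A K a)) 0 := by simpa using h0
    have := hinj this
    rwa [← Ideal.Quotient.eq_zero_iff_mem]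
  · intro hmem
    rw [Ideal.Quotient.eq_zero_iff_mem.2 hmem]
    simp

end Paper

open Paper in
/-- Corollary 2.6: over an uncountable algebraically closed field, an
irreducible constructible set covered by countably many relatively closed subsets is
contained in one of them. -/
theorem statement5 (Ω : Type) [Field Ω] [IsAlgClosed Ω] [Uncountable Ω] (t : ℕ)
    (X : Set (Fin t → Ω)) (hX : IsConstructibleOver Ω Ω t X)
    (hirr : @IsIrreducible _ (zar Ω (Fin t)) X)
    (I : Type) [Countable I] (Xi : I → Set (Fin t → Ω))
    (hXi : ∀ i, relClosed (zar Ω (Fin t)) X (Xi i))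
    (hcov : X ⊆ ⋃ i, Xi i) :
    ∃ i, X ⊆ Xi i := by
  classical
  by_contra hcon
  push_neg at hcon
  letI τ := zar Ω (Fin t)
  have hfi : ∀ i : I, ∃ f : MvPolynomial (Fin t) Ω,
      (∀ x ∈ Xi i, MvPolynomial.eval x f = 0) ∧ ∃ y ∈ X, MvPolynomial.eval y f ≠ 0 := by
    intro i
    obtain ⟨C, hC, hCeq⟩ := hXi i
    obtain ⟨y, hyX, hyXi⟩ := Set.not_subset.1 (hcon i)
    have hyC : y ∈ Cᶜ := fun hyC => hyXi (by rw [hCeq]; exact ⟨hyC, hyX⟩)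
    obtain ⟨f, hfy, hfsub⟩ := zar_mem_open hC.isOpen_compl hyC
    refine ⟨f, fun x hx => ?_, y, hyX, hfy⟩
    by_contra hfx
    have hxC : x ∈ C := by rw [hCeq] at hx; exact hx.1
    exact (hfsub hfx) hxC
  choose fi hfivan hfinz using hfi
  obtain ⟨n, A, g, hXeq⟩ := hX
  simp only [Algebra.algebraMap_self, MvPolynomial.map_id] at hXeq
  set S : Fin n → Set (Fin t → Ω) := fun i =>
    {x | (∀ f ∈ A i, MvPolynomial.eval x f = 0) ∧ MvPolynomial.eval x (g i) ≠ 0} with hSdef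
  obtain ⟨Z, hZmem, hXZ⟩ : ∃ Z ∈ Finset.image (fun i => @closure _ τ (S i)) Finset.univ,
      X ⊆ Z := by
    refine (@isIrreducible_iff_sUnion_isClosed _ τ X).1 hirr _ ?_ ?_
    · intro z hz
      obtain ⟨i, -, rfl⟩ := Finset.mem_image.1 hz
      exact isClosed_closure
    · intro x hx
      rw [hXeq] at hx
      obtain ⟨_, ⟨i, rfl⟩, hxi⟩ := hx
      exact ⟨@closure _ τ (S i), by simp, subset_closure hxi⟩
  obtain ⟨i0, -, rfl⟩ := Finset.mem_image.1 hZmem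
  have hXV : ∀ f ∈ A i0, ∀ x ∈ X, MvPolynomial.eval x f = 0 := by
    have hcl : X ⊆ {x | ∀ f ∈ A i0, MvPolynomial.eval x f = 0} :=
      hXZ.trans (closure_minimal (fun x hx => hx.1) (zar_isClosed_V (A i0)))
    exact fun f hf x hx => hcl hx f hf
  have hSne : (S i0).Nonempty := by
    rcases Set.eq_empty_or_nonempty (S i0) with hSe | h
    · exfalso
      obtain ⟨x0, hx0⟩ := hirr.1
      have hmem := hXZ hx0
      rw [hSe, closure_empty] at hmem
      exact hmem
    · exact h
  obtain ⟨z, hzA, hzg⟩ := hSne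
  have hzX : z ∈ X := by rw [hXeq]; exact Set.mem_iUnion.2 ⟨i0, hzA, hzg⟩
  obtain ⟨Bfin, hBspan⟩ :=
    (IsNoetherian.noetherian (Ideal.span (A i0)) : (Ideal.span (A i0)).FG)
  set S0 : Set Ω := ((⋃ i : I, Set.range (fun m => MvPolynomial.coeff m (fi i))) ∪
      Set.range (fun m => MvPolynomial.coeff m (g i0))) ∪
      (⋃ b ∈ Bfin, Set.range (fun m => MvPolynomial.coeff m b)) with hS0def
  have hS0c : S0.Countable :=
    (((Set.countable_iUnion (fun i => Set.countable_range _)).union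
      (Set.countable_range _))).union
      (Set.Countable.biUnion Bfin.countable_toSet (fun _ _ => Set.countable_range _))
  set k : Subfield Ω := Subfield.closure S0 with hkdef
  haveI hkc : Countable ↥k := by
    rw [← Cardinal.mk_le_aleph0_iff]
    refine le_trans (Subfield.cardinalMk_closure_le_max S0) (max_le ?_ le_rfl)
    exact Cardinal.mk_le_aleph0_iff.2 hS0c.to_subtype
  have hfi' : ∀ i : I, ∃ f', MvPolynomial.map k.subtype f' = fi i := fun i =>
    coeffs_mem_subfield k (fi i) (fun m => Subfield.subset_closure
      (Or.inl (Or.inl (Set.mem_iUnion.2 ⟨i, ⟨m, rfl⟩⟩))))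
  choose fi' hfi'eq using hfi'
  obtain ⟨g', hg'eq⟩ := coeffs_mem_subfield k (g i0) (fun m => Subfield.subset_closure
    (Or.inl (Or.inr ⟨m, rfl⟩)))
  have hb' : ∀ b ∈ Bfin, ∃ b', MvPolynomial.map k.subtype b' = b := fun b hb =>
    coeffs_mem_subfield k b (fun m => Subfield.subset_closure
      (Or.inr (Set.mem_biUnion hb ⟨m, rfl⟩)))
  choose b' hb'eq using hb'
  set p : Ideal (MvPolynomial (Fin t) ↥k) :=
    { carrier := {h | ∀ x ∈ X, MvPolynomial.eval x (MvPolynomial.map k.subtype h) = 0},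
      add_mem' := fun ha hb x hx => by
        rw [map_add, map_add, ha x hx, hb x hx, add_zero]
      zero_mem' := fun x hx => by simp
      smul_mem' := fun c h hh x hx => by
        rw [smul_eq_mul, map_mul, map_mul, hh x hx, mul_zero] } with hpdef
  have hpmem : ∀ h, h ∈ p ↔ ∀ x ∈ X, MvPolynomial.eval x (MvPolynomial.map k.subtype h) = 0 :=
    fun h => Iff.rfl
  haveI hpprime : p.IsPrime := by
    rw [Ideal.isPrime_iff]
    constructor
    · intro htop
      obtain ⟨x0, hx0⟩ := hirr.1
      have h1 : (1 : MvPolynomial (Fin t) ↥k) ∈ p := htop ▸ Submodule.mem_top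
      have h2 := (hpmem 1).1 h1 x0 hx0
      simp at h2
    · intro h1 h2 hmul
      by_contra hor
      push_neg at hor
      obtain ⟨hn1, hn2⟩ := hor
      have e1 : ∃ x ∈ X, MvPolynomial.eval x (MvPolynomial.map k.subtype h1) ≠ 0 := by
        by_contra he; push_neg at he; exact hn1 ((hpmem h1).2 he)
      have e2 : ∃ x ∈ X, MvPolynomial.eval x (MvPolynomial.map k.subtype h2) ≠ 0 := by
        by_contra he; push_neg at he; exact hn2 ((hpmem h2).2 he)
      obtain ⟨x1, hx1X, hx1⟩ := e1
      obtain ⟨x2, hx2X, hx2⟩ := e2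
      obtain ⟨w, hwX, hw1, hw2⟩ := hirr.2
        {x | MvPolynomial.eval x (MvPolynomial.map k.subtype h1) ≠ 0}
        {x | MvPolynomial.eval x (MvPolynomial.map k.subtype h2) ≠ 0}
        (zar_basic_isOpen _) (zar_basic_isOpen _) ⟨x1, hx1X, hx1⟩ ⟨x2, hx2X, hx2⟩
      have := (hpmem _).1 hmul w hwX
      rw [map_mul, map_mul] at this
      exact (mul_ne_zero hw1 hw2) this
  obtain ⟨x, hx⟩ := exists_generic Ω t ↥k k.subtype p
  have hBvan : ∀ bb ∈ Bfin, MvPolynomial.eval x bb = 0 := by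
    intro bb hbb
    have hbbX : ∀ xp ∈ X, MvPolynomial.eval xp bb = 0 := by
      intro xp hxp
      have hsub : Ideal.span (A i0) ≤ RingHom.ker (MvPolynomial.eval xp) :=
        Ideal.span_le.2 (fun f hf => hXV f hf xp hxp)
      have hbmem : bb ∈ Ideal.span (A i0) := by
        rw [← hBspan]; exact Submodule.subset_span hbb
      exact hsub hbmem
    have hbp : b' bb hbb ∈ p := (hpmem _).2 (fun xp hxp => by
      rw [hb'eq bb hbb]; exact hbbX xp hxp)
    have := (hx (b' bb hbb)).2 hbp
    rwa [hb'eq bb hbb] at this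
  have hxA : ∀ f ∈ A i0, MvPolynomial.eval x f = 0 := by
    intro f hf
    have hsub : Ideal.span (↑Bfin : Set (MvPolynomial (Fin t) Ω)) ≤
        RingHom.ker (MvPolynomial.eval x) :=
      Ideal.span_le.2 (fun bb hbb => hBvan bb hbb)
    have hfmem : f ∈ Ideal.span (↑Bfin : Set (MvPolynomial (Fin t) Ω)) := by
      show f ∈ Submodule.span (MvPolynomial (Fin t) Ω) (↑Bfin : Set (MvPolynomial (Fin t) Ω))
      rw [hBspan]; exact Ideal.subset_span hf
    exact hsub hfmem
  have hxg : MvPolynomial.eval x (g i0) ≠ 0 := by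
    have hg'p : g' ∉ p := by
      intro hmem
      have := (hpmem g').1 hmem z hzX
      rw [hg'eq] at this
      exact hzg this
    have := (hx g').not
    rw [hg'eq] at this
    exact fun h0 => hg'p ((hx g').1 (by rw [hg'eq]; exact h0))
  have hxX : x ∈ X := by
    rw [hXeq]; exact Set.mem_iUnion.2 ⟨i0, hxA, hxg⟩
  obtain ⟨Ui, ⟨i, rfl⟩, hxi⟩ := hcov hxX
  have hfix : MvPolynomial.eval x (fi i) = 0 := hfivan i x hxi
  have hfip : fi' i ∈ p := (hx (fi' i)).1 (by rw [hfi'eq i]; exact hfix)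
  obtain ⟨y, hyX, hyne⟩ := hfinz i
  have := (hpmem (fi' i)).1 hfip y hyX
  rw [hfi'eq i] at this
  exact hyne this
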